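/- Let A be an m×n real matrix and η > 0 with ‖A‖ ≤ √(1/(3η)). Then the largest singular value of A(I − η AᵀA) equals σ₁(A) − η σ₁(A)³, and the smallest singular value of A(I − η AᵀA) equals σ_min(A) − η σ_min(A)³. -/

import Mathlib

open Matrix BigOperators

/-- Spectral (operator) norm of a real matrix, via the induced Euclidean operator norm. -/
noncomputable def specNorm {m n : ℕ} (A : Matrix (Fin m) (Fin n) ℝ) : ℝ :=
  ‖(Matrix.toEuclideanLin (𝕜 := ℝ) A).toContinuousLinearMap‖

/-- Singular values of a real matrix: square roots of the eigenvalues of `A * Aᵀ`. -/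
noncomputable def sv {m n : ℕ} (A : Matrix (Fin m) (Fin n) ℝ) (i : Fin m) : ℝ :=
  Real.sqrt ((Matrix.isHermitian_mul_conjTranspose_self A).eigenvalues i)

/-- Largest singular value. -/
noncomputable def sigmaMax {m n : ℕ} (hm : 0 < m) (A : Matrix (Fin m) (Fin n) ℝ) : ℝ :=
  Finset.univ.sup' ⟨⟨0, hm⟩, Finset.mem_univ _⟩ (sv A)

/-- Smallest singular value. -/
noncomputable def sigmaMin {m n : ℕ} (hm : 0 < m) (A : Matrix (Fin m) (Fin n) ℝ) : ℝ :=
  Finset.univ.inf' ⟨⟨0, hm⟩, Finset.mem_univ _⟩ (sv A)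

/-- Monotonicity of `x ↦ x - η x³` on `[0, √(1/(3η))]`. -/
private lemma cube_mono {η a b : ℝ} (hη : 0 < η) (ha : 0 ≤ a) (hab : a ≤ b)
    (hb : b ≤ Real.sqrt (1/(3*η))) : a - η*a^3 ≤ b - η*b^3 := by
  have h0 : (0:ℝ) ≤ 1/(3*η) := by positivity
  have hc : b^2 ≤ 1/(3*η) := by
    nlinarith [Real.sq_sqrt h0, Real.sqrt_nonneg (1/(3*η))]
  have hc' : 3 * η * b^2 ≤ 1 := by
    rw [le_div_iff₀ (by positivity : (0:ℝ) < 3*η)] at hc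
    linarith
  have hb0 : 0 ≤ b := le_trans ha hab
  have key : η * (a^2 + a*b + b^2) ≤ 1 := by
    nlinarith [mul_nonneg (mul_nonneg hη.le hb0) (sub_nonneg.mpr hab),
      mul_nonneg (mul_nonneg hη.le ha) (sub_nonneg.mpr hab)]
  nlinarith [mul_nonneg (sub_nonneg.mpr hab) (sub_nonneg.mpr key)]

private lemma sqrt_q {η x : ℝ} (hη : 0 < η) (hx : 0 ≤ x) (hx2 : x ≤ 1/(3*η)) :
    Real.sqrt (x - 2*η*x^2 + η^2*x^3) = Real.sqrt x - η * (Real.sqrt x)^3 := by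
  have h1 : x - 2*η*x^2 + η^2*x^3 = x * (1-η*x)^2 := by ring
  have he : η * (1/(3*η)) = 1/3 := by field_simp
  have h2 : 0 ≤ 1 - η*x := by nlinarith [mul_le_mul_of_nonneg_left hx2 hη.le]
  rw [h1, Real.sqrt_mul hx, Real.sqrt_sq h2]
  have h3 : Real.sqrt x ^ 3 = x * Real.sqrt x := by
    rw [pow_succ, Real.sq_sqrt hx]
  rw [h3]; ring

/-- Spectral-theorem computation of `B Bᴴ` for `B = A (1 - η AᵀA)` as a conjugated diagonal. -/
private lemma BBt_eq {m n : ℕ} (A : Matrix (Fin m) (Fin n) ℝ) (η : ℝ) :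
    (A * (1 - η • (Aᵀ * A))) * (A * (1 - η • (Aᵀ * A)))ᴴ =
      ((Matrix.isHermitian_mul_conjTranspose_self A).eigenvectorUnitary :
          Matrix (Fin m) (Fin m) ℝ) *
        diagonal (fun i => (Matrix.isHermitian_mul_conjTranspose_self A).eigenvalues i
          - 2*η*((Matrix.isHermitian_mul_conjTranspose_self A).eigenvalues i)^2
          + η^2*((Matrix.isHermitian_mul_conjTranspose_self A).eigenvalues i)^3) *
        star ((Matrix.isHermitian_mul_conjTranspose_self A).eigenvectorUnitary :
          Matrix (Fin m) (Fin m) ℝ) := by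
  set hM := Matrix.isHermitian_mul_conjTranspose_self A with hMdef
  have halg : (A * (1 - η • (Aᵀ * A))) * (A * (1 - η • (Aᵀ * A)))ᴴ =
      A * Aᴴ - (2*η) • (A * Aᴴ * (A * Aᴴ)) + (η^2) • (A * Aᴴ * (A * Aᴴ) * (A * Aᴴ)) := by
    simp only [conjTranspose_eq_transpose_of_trivial, transpose_mul, transpose_sub,
      transpose_smul, transpose_one, transpose_transpose]
    simp only [Matrix.mul_sub, Matrix.sub_mul, Matrix.mul_smul, Matrix.smul_mul,
      Matrix.mul_one, Matrix.one_mul, smul_smul, Matrix.mul_assoc]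
    module
  rw [halg]
  set U := (hM.eigenvectorUnitary : Matrix (Fin m) (Fin m) ℝ) with hU
  have h1 : star U * U = 1 :=
    Unitary.star_mul_self_of_mem hM.eigenvectorUnitary.2
  have hD : A * Aᴴ = U * diagonal hM.eigenvalues * star U := by
    have := hM.spectral_theorem
    rwa [RCLike.ofReal_real_eq_id, Function.id_comp] at this
  have key : ∀ d e : Fin m → ℝ, (U * diagonal d * star U) * (U * diagonal e * star U)
      = U * diagonal (d * e) * star U := by
    intro d e
    simp only [Matrix.mul_assoc]
    rw [← Matrix.mul_assoc (star U) U, h1, Matrix.one_mul,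
      ← Matrix.mul_assoc (diagonal d), diagonal_mul_diagonal]
    rfl
  conv_lhs => rw [hD]
  conv_lhs => rw [key, key]
  have expand : ∀ (a b c : Matrix (Fin m) (Fin m) ℝ),
      U * a * star U - (2*η) • (U * b * star U) + η^2 • (U * c * star U)
        = U * (a - (2*η) • b + η^2 • c) * star U := by
    intro a b c
    simp only [Matrix.mul_sub, Matrix.sub_mul, Matrix.mul_add, Matrix.add_mul,
      Matrix.mul_smul, Matrix.smul_mul]
  rw [expand]
  congr 2
  ext i j
  by_cases h : i = j
  · subst h
    simp [Matrix.diagonal_apply_eq]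
    ring
  · simp [Matrix.diagonal_apply_ne _ h]

/-- The eigenvalues of `B Bᴴ` are the image of those of `A Aᴴ` under `x ↦ x(1-ηx)²`. -/
private lemma range_eig {m n : ℕ} (A : Matrix (Fin m) (Fin n) ℝ) (η : ℝ) :
    Set.range ((Matrix.isHermitian_mul_conjTranspose_self (A * (1 - η • (Aᵀ * A)))).eigenvalues)
      = (fun x => x - 2*η*x^2 + η^2*x^3) ''
        Set.range ((Matrix.isHermitian_mul_conjTranspose_self A).eigenvalues) := by
  rw [← Matrix.IsHermitian.spectrum_real_eq_range_eigenvalues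
    (Matrix.isHermitian_mul_conjTranspose_self (A * (1 - η • (Aᵀ * A))))]
  rw [BBt_eq A η, Unitary.spectrum_star_right_conjugate, spectrum_diagonal]
  rw [← Set.range_comp]
  rfl

/-- Every eigenvalue of `A Aᴴ` is at most `specNorm A ^ 2`. -/
private lemma eig_le_specNorm_sq {m n : ℕ} (A : Matrix (Fin m) (Fin n) ℝ) (i : Fin m) :
    (Matrix.isHermitian_mul_conjTranspose_self A).eigenvalues i ≤ specNorm A ^ 2 := by
  set hM := Matrix.isHermitian_mul_conjTranspose_self A
  set lam := hM.eigenvalues i with hlamdef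
  set v : EuclideanSpace ℝ (Fin m) := hM.eigenvectorBasis i with hvdef
  have hv1 : ‖v‖ = 1 := hM.eigenvectorBasis.orthonormal.1 i
  have hmv : (A * Aᴴ) *ᵥ ⇑v = lam • ⇑v := hM.mulVec_eigenvectorBasis i
  set u : EuclideanSpace ℝ (Fin n) := (WithLp.equiv 2 (Fin n → ℝ)).symm (Aᴴ *ᵥ ⇑v) with hudef
  have hdot : dotProduct (Aᴴ *ᵥ ⇑v) (Aᴴ *ᵥ ⇑v) = lam := by
    rw [Matrix.dotProduct_mulVec, Matrix.vecMul_conjTranspose]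
    have : star (Aᴴ *ᵥ ⇑v) = Aᴴ *ᵥ ⇑v := by simp
    rw [this, Matrix.mulVec_mulVec, hmv]
    have hv2 : dotProduct ⇑v ⇑v = 1 := by
      have h := EuclideanSpace.inner_eq_star_dotProduct v v
      rw [real_inner_self_eq_norm_sq, hv1] at h
      simpa using h.symm
    simp [hv2]
  have hnormu : ‖u‖ ^ 2 = lam := by
    rw [← real_inner_self_eq_norm_sq, EuclideanSpace.inner_eq_star_dotProduct]
    simpa [hudef] using hdot
  have hlam0 : 0 ≤ lam := by
    rw [← hnormu]; positivity
  set T := (Matrix.toEuclideanLin (𝕜 := ℝ) A).toContinuousLinearMap with hT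
  have hTu : T u = lam • v := by
    show Matrix.toEuclideanLin (𝕜 := ℝ) A u = lam • v
    rw [hudef, WithLp.equiv_symm_apply, Matrix.toEuclideanLin_apply_piLp_toLp, Matrix.mulVec_mulVec, hmv]
    rfl
  have hTun : ‖T u‖ = lam := by
    rw [hTu, norm_smul, hv1, mul_one, Real.norm_eq_abs, abs_of_nonneg hlam0]
  have hb := T.le_opNorm u
  rw [hTun] at hb
  have hus : ‖u‖ = Real.sqrt lam := by
    rw [← hnormu, Real.sqrt_sq (norm_nonneg u)]
  rw [hus] at hb
  have hTnn : (0:ℝ) ≤ ‖T‖ := norm_nonneg T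
  rcases eq_or_lt_of_le hlam0 with h0 | h0
  · rw [← h0]; positivity
  · have hs : 0 < Real.sqrt lam := Real.sqrt_pos.mpr h0
    have hsq : Real.sqrt lam * Real.sqrt lam = lam := Real.mul_self_sqrt hlam0
    show lam ≤ ‖T‖ ^ 2
    nlinarith [hb, hs, hsq, hTnn]

/-- If `A` is an `m × n` real matrix and `‖A‖ ≤ √(1/(3η))`, then the largest and smallest singular
values of `A (I - η AᵀA)` are `σ₁(A) - η σ₁(A)³` and `σ_min(A) - η σ_min(A)³`. -/
theorem stmt1 {m n : ℕ} (hm : 0 < m) (A : Matrix (Fin m) (Fin n) ℝ) (η : ℝ) (hη : 0 < η)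
    (hA : specNorm A ≤ Real.sqrt (1 / (3 * η))) :
    sigmaMax hm (A * (1 - η • (Aᵀ * A))) = sigmaMax hm A - η * (sigmaMax hm A) ^ 3 ∧
    sigmaMin hm (A * (1 - η • (Aᵀ * A))) = sigmaMin hm A - η * (sigmaMin hm A) ^ 3 := by
  have h0 : (0:ℝ) ≤ 1/(3*η) := by positivity
  set B := A * (1 - η • (Aᵀ * A)) with hBdef
  -- each eigenvalue of A Aᴴ lies in [0, 1/(3η)]
  have heig0 : ∀ i, 0 ≤ (Matrix.isHermitian_mul_conjTranspose_self A).eigenvalues i :=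
    fun i => Matrix.eigenvalues_self_mul_conjTranspose_nonneg A i
  have heig1 : ∀ i, (Matrix.isHermitian_mul_conjTranspose_self A).eigenvalues i ≤ 1/(3*η) := by
    intro i
    refine le_trans (eig_le_specNorm_sq A i) ?_
    have hn : (0:ℝ) ≤ specNorm A := norm_nonneg _
    nlinarith [Real.sq_sqrt h0, Real.sqrt_nonneg (1/(3*η))]
  -- sv A values lie in [0, √(1/(3η))]
  have hsv0 : ∀ i, 0 ≤ sv A i := fun i => Real.sqrt_nonneg _
  have hsvle : ∀ i, sv A i ≤ Real.sqrt (1/(3*η)) := by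
    intro i
    exact Real.sqrt_le_sqrt (heig1 i)
  -- range of sv B is the image of range of sv A under g
  set g : ℝ → ℝ := fun x => x - η * x^3 with hg
  have hrange : Set.range (sv B) = g '' Set.range (sv A) := by
    have h1 : Set.range (sv B) = Real.sqrt ''
        ((fun x => x - 2*η*x^2 + η^2*x^3) ''
          Set.range ((Matrix.isHermitian_mul_conjTranspose_self A).eigenvalues)) := by
      rw [← range_eig A η, ← Set.range_comp]
      rfl
    rw [h1, ← Set.image_comp]
    have h2 : g '' Set.range (sv A) =
        (g ∘ Real.sqrt) '' Set.range ((Matrix.isHermitian_mul_conjTranspose_self A).eigenvalues) := by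
      rw [← Set.range_comp, ← Set.range_comp]
      rfl
    rw [h2]
    apply Set.image_congr
    rintro x ⟨i, rfl⟩
    simp only [Function.comp_apply, hg]
    exact sqrt_q hη (heig0 i) (heig1 i)
  have hBA : ∀ i, ∃ j, sv B i = g (sv A j) := by
    intro i
    have : sv B i ∈ Set.range (sv B) := ⟨i, rfl⟩
    rw [hrange] at this
    obtain ⟨x, ⟨j, rfl⟩, hx⟩ := this
    exact ⟨j, hx.symm⟩
  have hAB : ∀ j, ∃ i, sv B i = g (sv A j) := by
    intro j
    have : g (sv A j) ∈ g '' Set.range (sv A) := ⟨sv A j, ⟨j, rfl⟩, rfl⟩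
    rw [← hrange] at this
    obtain ⟨i, hi⟩ := this
    exact ⟨i, hi⟩
  have hne : (Finset.univ : Finset (Fin m)).Nonempty := ⟨⟨0, hm⟩, Finset.mem_univ _⟩
  constructor
  · -- sigmaMax
    apply le_antisymm
    · apply Finset.sup'_le
      intro i _
      obtain ⟨j, hj⟩ := hBA i
      rw [hj]
      exact cube_mono hη (hsv0 j) (Finset.le_sup' (sv A) (Finset.mem_univ j))
        (Finset.sup'_le _ _ fun k _ => hsvle k)
    · obtain ⟨i₀, -, hi₀⟩ := Finset.exists_mem_eq_sup' hne (sv A)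
      obtain ⟨i, hi⟩ := hAB i₀
      calc sigmaMax hm A - η * (sigmaMax hm A)^3 = g (sv A i₀) := by rw [hg]; simp [sigmaMax, ← hi₀]
        _ = sv B i := hi.symm
        _ ≤ _ := Finset.le_sup' (sv B) (Finset.mem_univ i)
  · -- sigmaMin
    apply le_antisymm
    · obtain ⟨i₀, -, hi₀⟩ := Finset.exists_mem_eq_inf' hne (sv A)
      obtain ⟨i, hi⟩ := hAB i₀
      calc sigmaMin hm B ≤ sv B i := Finset.inf'_le (sv B) (Finset.mem_univ i)
        _ = g (sv A i₀) := hi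
        _ = sigmaMin hm A - η * (sigmaMin hm A)^3 := by rw [hg]; simp [sigmaMin, ← hi₀]
    · apply Finset.le_inf'
      intro i _
      obtain ⟨j, hj⟩ := hBA i
      rw [hj]
      exact cube_mono hη (Finset.le_inf' _ _ fun k _ => hsv0 k)
        (Finset.inf'_le (sv A) (Finset.mem_univ j)) (hsvle j)
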